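/- For all i, j ∈ {1,2,3} and all m ∈ ℤ, one has [β_{j,m}, P_i] = 0 as endomorphisms of V. -/
import Mathlib


open Finset

/-- Levi-Civita symbol on `{1,2,3}` (indexed by `Fin 3`). -/
def eps (i j k : Fin 3) : ℤ :=
  (((j : ℤ) - (i : ℤ)) * ((k : ℤ) - (i : ℤ)) * ((k : ℤ) - (j : ℤ))) / 2

variable {V : Type*} [AddCommGroup V] [Module ℂ V]

/-- `x^i_n`: equals the given `x^i_0` for `n = 0`, and `−(1/n) α^i_n` for `n ≠ 0`. -/
noncomputable def xop (α : Fin 3 → ℤ → Module.End ℂ V) (x0 : Fin 3 → Module.End ℂ V)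
    (i : Fin 3) (n : ℤ) : Module.End ℂ V :=
  if n = 0 then x0 i else (-(n : ℂ)⁻¹) • α i n

/-- `P_i = β_{i,0} + Σ_{j,k} ε_{ijk} x^j_0 W^k − ½ Σ_{j,k} ε_{ijk} Σ_{m∈ℤ} m x^j_{−m} x^k_m`,
defined pointwise on vectors (the inner sum has finitely many nonzero terms on each vector). -/
noncomputable def Pop (α β : Fin 3 → ℤ → Module.End ℂ V) (x0 : Fin 3 → Module.End ℂ V)
    (i : Fin 3) : V → V := fun v =>
  β i 0 v + (∑ j : Fin 3, ∑ k : Fin 3, eps i j k • (x0 j) ((α k 0) v))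
    - (2 : ℂ)⁻¹ • ∑ j : Fin 3, ∑ k : Fin 3, eps i j k •
        ∑ᶠ m : ℤ, (m : ℂ) • (xop α x0 j (-m)) ((xop α x0 k m) v)

/-- `x*_{i,n} = −(1/n)(β_{i,n} + Σ_{j,k} ε_{ijk} x^j_n W^k − ½ Σ_{j,k} ε_{ijk} Σ_m m x^j_{n−m} x^k_m)`
for `n ≠ 0`, defined pointwise on vectors. -/
noncomputable def xstarop (α β : Fin 3 → ℤ → Module.End ℂ V) (x0 : Fin 3 → Module.End ℂ V)
    (i : Fin 3) (n : ℤ) : V → V := fun v =>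
  (-(n : ℂ)⁻¹) • (β i n v + (∑ j : Fin 3, ∑ k : Fin 3, eps i j k • (xop α x0 j n) ((α k 0) v))
    - (2 : ℂ)⁻¹ • ∑ j : Fin 3, ∑ k : Fin 3, eps i j k •
        ∑ᶠ m : ℤ, (m : ℂ) • (xop α x0 j (n - m)) ((xop α x0 k m) v))


lemma eps_swap12 : ∀ a b c : Fin 3, eps a b c = - eps b a c := by decide

lemma eps_swap23 : ∀ a b c : Fin 3, eps a b c = - eps a c b := by decide

lemma endapp {f g h : Module.End ℂ V} (hc : ⁅f, g⁆ = h) (u : V) :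
    f (g u) = g (f u) + h u := by
  have h1 := LinearMap.congr_fun hc u
  rw [Ring.lie_def, LinearMap.sub_apply, Module.End.mul_apply, Module.End.mul_apply] at h1
  rw [← h1]; abel

lemma comm0 {f g : Module.End ℂ V} (hc : ⁅f, g⁆ = 0) (u : V) : f (g u) = g (f u) := by
  have := endapp hc u; simpa using this

lemma xop_comm (α : Fin 3 → ℤ → Module.End ℂ V) (x0 : Fin 3 → Module.End ℂ V)
    (R1 : ∀ (i j : Fin 3) (m n : ℤ), ⁅α i m, α j n⁆ = 0)
    (R5a : ∀ (i j : Fin 3) (n : ℤ), ⁅α j n, x0 i⁆ = 0)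
    (R5b : ∀ i j : Fin 3, ⁅x0 i, x0 j⁆ = 0)
    (c d : Fin 3) (p q : ℤ) (u : V) :
    (xop α x0 c p) ((xop α x0 d q) u) = (xop α x0 d q) ((xop α x0 c p) u) := by
  unfold xop
  by_cases hp : p = 0
  · by_cases hq : q = 0
    · simp only [if_pos hp, if_pos hq]; exact comm0 (R5b c d) u
    · simp only [if_pos hp, if_neg hq, LinearMap.smul_apply, map_smul]
      congr 1; exact (comm0 (R5a c d q) u).symm
  · by_cases hq : q = 0
    · simp only [if_neg hp, if_pos hq, LinearMap.smul_apply, map_smul]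
      congr 1; exact comm0 (R5a d c p) u
    · simp only [if_neg hp, if_neg hq, LinearMap.smul_apply, map_smul, smul_smul]
      rw [mul_comm]; congr 1; exact comm0 (R1 c d p q) u

lemma beta_alpha (α β : Fin 3 → ℤ → Module.End ℂ V)
    (R2 : ∀ (i j : Fin 3) (m n : ℤ), ⁅β i m, α j n⁆
      = if i = j ∧ m + n = 0 then (m : ℂ) • (1 : Module.End ℂ V) else 0)
    (a c : Fin 3) (p n : ℤ) (u : V) :
    (β a p) ((α c n) u) = (α c n) ((β a p) u)
      + (if a = c ∧ p + n = 0 then (p : ℂ) • u else 0) := by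
  rw [endapp (R2 a c p n) u]
  congr 1
  by_cases h : a = c ∧ p + n = 0
  · rw [if_pos h, if_pos h]; simp
  · rw [if_neg h, if_neg h]; simp

lemma beta_x0 (β : Fin 3 → ℤ → Module.End ℂ V) (x0 : Fin 3 → Module.End ℂ V)
    (R6 : ∀ (i j : Fin 3) (n : ℤ), ⁅β j n, x0 i⁆
      = if i = j ∧ n = 0 then (1 : Module.End ℂ V) else 0)
    (a c : Fin 3) (p : ℤ) (u : V) :
    (β a p) ((x0 c) u) = (x0 c) ((β a p) u) + (if c = a ∧ p = 0 then u else 0) := by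
  rw [endapp (R6 c a p) u]
  congr 1
  by_cases h : c = a ∧ p = 0
  · rw [if_pos h, if_pos h]; simp
  · rw [if_neg h, if_neg h]; simp

lemma beta_xop (α β : Fin 3 → ℤ → Module.End ℂ V) (x0 : Fin 3 → Module.End ℂ V)
    (R2 : ∀ (i j : Fin 3) (m n : ℤ), ⁅β i m, α j n⁆
      = if i = j ∧ m + n = 0 then (m : ℂ) • (1 : Module.End ℂ V) else 0)
    (R6 : ∀ (i j : Fin 3) (n : ℤ), ⁅β j n, x0 i⁆
      = if i = j ∧ n = 0 then (1 : Module.End ℂ V) else 0)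
    (a c : Fin 3) (p n : ℤ) (u : V) :
    (β a p) ((xop α x0 c n) u) = (xop α x0 c n) ((β a p) u)
      + (if c = a ∧ p + n = 0 then u else 0) := by
  unfold xop
  by_cases hn : n = 0
  · subst hn
    rw [if_pos rfl]
    rw [beta_x0 β x0 R6 a c p u]
    congr 1
    by_cases h : c = a ∧ p = 0
    · rw [if_pos h, if_pos ⟨h.1, by omega⟩]
    · rw [if_neg h, if_neg (by intro hh; exact h ⟨hh.1, by omega⟩)]
  · simp only [if_neg hn, LinearMap.smul_apply, map_smul]
    rw [beta_alpha α β R2 a c p n u, smul_add]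
    congr 1
    by_cases h : a = c ∧ p + n = 0
    · rw [if_pos h, if_pos ⟨h.1.symm, h.2⟩, smul_smul]
      have hn' : (n : ℂ) ≠ 0 := Int.cast_ne_zero.mpr hn
      have hp : (p : ℂ) = -(n : ℂ) := by
        have : p = -n := by omega
        rw [this]; push_cast; ring
      rw [hp]
      rw [show -(n:ℂ)⁻¹ * -(n:ℂ) = 1 by field_simp, one_smul]
    · rw [if_neg h, if_neg (by intro hh; exact h ⟨hh.1.symm, hh.2⟩), smul_zero]

/-- `[β_{j,m}, P_i] = 0` (as endomorphisms, checked pointwise). -/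
theorem beta_P_commutator
    (α β : Fin 3 → ℤ → Module.End ℂ V) (x0 : Fin 3 → Module.End ℂ V)
    (R1 : ∀ (i j : Fin 3) (m n : ℤ), ⁅α i m, α j n⁆ = 0)
    (R2 : ∀ (i j : Fin 3) (m n : ℤ), ⁅β i m, α j n⁆
      = if i = j ∧ m + n = 0 then (m : ℂ) • (1 : Module.End ℂ V) else 0)
    (R3 : ∀ (i j : Fin 3) (m n : ℤ), ⁅β i m, β j n⁆ = ∑ k : Fin 3, eps i j k • α k (m + n))
    (R4 : ∀ v : V, ∃ N : ℤ, ∀ (i : Fin 3) (n : ℤ), N ≤ n → α i n v = 0 ∧ β i n v = 0)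
    (R5a : ∀ (i j : Fin 3) (n : ℤ), ⁅α j n, x0 i⁆ = 0)
    (R5b : ∀ i j : Fin 3, ⁅x0 i, x0 j⁆ = 0)
    (R6 : ∀ (i j : Fin 3) (n : ℤ), ⁅β j n, x0 i⁆
      = if i = j ∧ n = 0 then (1 : Module.End ℂ V) else 0)
    (i j : Fin 3) (m : ℤ) (v : V) :
    (β j m) (Pop α β x0 i v) - Pop α β x0 i ((β j m) v) = 0 := by
  classical
  obtain ⟨N₁, hN₁v⟩ := R4 v
  obtain ⟨N₂, hN₂w⟩ := R4 ((β j m) v)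
  set M : ℤ := max (max N₁ N₂) (|m| + 1) with hMdef
  have hM1 : (1:ℤ) ≤ M := le_trans (by linarith [abs_nonneg m]) (le_max_right _ _)
  have hNM1 : N₁ ≤ M := le_trans (le_max_left _ _) (le_max_left _ _)
  have hNM2 : N₂ ≤ M := le_trans (le_max_right _ _) (le_max_left _ _)
  have hmabs : |m| < M := lt_of_lt_of_le (by linarith) (le_max_right _ _)
  have hmM : m ∈ Finset.Icc (-M) M := by
    rw [Finset.mem_Icc]
    constructor
    · linarith [neg_abs_le m]
    · linarith [le_abs_self m]
  have hmM' : -m ∈ Finset.Icc (-M) M := by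
    rw [Finset.mem_Icc]
    constructor
    · linarith [le_abs_self m]
    · linarith [neg_abs_le m]
  -- truncation of the formal sums
  have key : ∀ (u : V) (N : ℤ), (∀ (a : Fin 3) (n : ℤ), N ≤ n → α a n u = 0) → N ≤ M →
      ∀ a b : Fin 3,
      (∑ᶠ n : ℤ, (n:ℂ) • (xop α x0 a (-n)) ((xop α x0 b n) u))
        = ∑ n ∈ Finset.Icc (-M) M, (n:ℂ) • (xop α x0 a (-n)) ((xop α x0 b n) u) := by
    intro u N hu hNM a b
    apply finsum_eq_sum_of_support_subset
    intro n hn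
    simp only [Function.mem_support] at hn
    simp only [Finset.coe_Icc, Set.mem_Icc]
    by_contra hc
    push_neg at hc
    apply hn
    rcases lt_or_ge n (-M) with h | h
    · rw [xop_comm α x0 R1 R5a R5b]
      have hz : (xop α x0 a (-n)) u = 0 := by
        unfold xop
        rw [if_neg (by omega : ¬(-n = 0)), LinearMap.smul_apply, hu a (-n) (by omega),
          smul_zero]
      rw [hz, map_zero, smul_zero]
    · have h' : M < n := hc h
      have hz : (xop α x0 b n) u = 0 := by
        unfold xop
        rw [if_neg (by omega : ¬(n = 0)), LinearMap.smul_apply, hu b n (by omega), smul_zero]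
      rw [hz, map_zero, smul_zero]
  have keyv := key v N₁ (fun a n h => (hN₁v a n h).1) hNM1
  have keyw := key ((β j m) v) N₂ (fun a n h => (hN₂w a n h).1) hNM2
  have expandv : Pop α β x0 i v = (β i 0) v
      + (∑ a : Fin 3, ∑ b : Fin 3, eps i a b • (x0 a) ((α b 0) v))
      - (2:ℂ)⁻¹ • ∑ a : Fin 3, ∑ b : Fin 3, eps i a b •
          ∑ n ∈ Finset.Icc (-M) M, (n:ℂ) • (xop α x0 a (-n)) ((xop α x0 b n) v) := by
    simp only [Pop, keyv]
  have expandw : Pop α β x0 i ((β j m) v) = (β i 0) ((β j m) v)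
      + (∑ a : Fin 3, ∑ b : Fin 3, eps i a b • (x0 a) ((α b 0) ((β j m) v)))
      - (2:ℂ)⁻¹ • ∑ a : Fin 3, ∑ b : Fin 3, eps i a b •
          ∑ n ∈ Finset.Icc (-M) M, (n:ℂ) • (xop α x0 a (-n)) ((xop α x0 b n) ((β j m) v)) := by
    simp only [Pop, keyw]
  -- leaf commutation lemmas
  have h1 : (β j m) ((β i 0) v) = (β i 0) ((β j m) v) + ∑ k : Fin 3, eps j i k • (α k m) v := by
    rw [endapp (R3 j i m 0) v]
    congr 1
    rw [show m + 0 = m from add_zero m]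
    simp [LinearMap.sum_apply, LinearMap.smul_apply]
  have h2 : ∀ a b : Fin 3, (β j m) ((x0 a) ((α b 0) v))
      = (x0 a) ((α b 0) ((β j m) v)) + (if a = j ∧ m = 0 then (α b 0) v else 0) := by
    intro a b
    rw [beta_x0 β x0 R6 j a m ((α b 0) v)]
    have hz : (β j m) ((α b 0) v) = (α b 0) ((β j m) v) := by
      rw [beta_alpha α β R2 j b m 0 v]
      have : (if j = b ∧ m + 0 = 0 then (m:ℂ) • v else 0) = 0 := by
        by_cases h : j = b ∧ m + 0 = 0
        · rw [if_pos h]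
          have hm0 : m = 0 := by have := h.2; omega
          simp [hm0]
        · rw [if_neg h]
      rw [this, add_zero]
    rw [hz]
  have h3 : ∀ a b : Fin 3,
      (β j m) (∑ n ∈ Finset.Icc (-M) M, (n:ℂ) • (xop α x0 a (-n)) ((xop α x0 b n) v))
      = (∑ n ∈ Finset.Icc (-M) M, (n:ℂ) • (xop α x0 a (-n)) ((xop α x0 b n) ((β j m) v)))
        + ((if b = j then (-(m:ℂ)) • (xop α x0 a m) v else 0)
          + (if a = j then (m:ℂ) • (xop α x0 b m) v else 0)) := by
    intro a b
    rw [map_sum]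
    have hterm : ∀ n ∈ Finset.Icc (-M) M,
        (β j m) ((n:ℂ) • (xop α x0 a (-n)) ((xop α x0 b n) v))
        = (n:ℂ) • (xop α x0 a (-n)) ((xop α x0 b n) ((β j m) v))
          + ((if n = -m then (if b = j then ((n:ℂ) • (xop α x0 a (-n)) v) else 0) else 0)
            + (if n = m then (if a = j then ((n:ℂ) • (xop α x0 b n) v) else 0) else 0)) := by
      intro n _
      rw [map_smul, beta_xop α β x0 R2 R6 j a m (-n) ((xop α x0 b n) v),
          beta_xop α β x0 R2 R6 j b m n v, map_add]
      have hB : (n:ℂ) • (xop α x0 a (-n)) (if b = j ∧ m + n = 0 then v else 0)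
          = (if n = -m then (if b = j then ((n:ℂ) • (xop α x0 a (-n)) v) else 0) else 0) := by
        by_cases h1 : n = -m
        · subst h1
          by_cases hb : b = j
          · rw [if_pos ⟨hb, by omega⟩, if_pos rfl, if_pos hb]
          · rw [if_neg (fun h => hb h.1), if_pos rfl, if_neg hb, map_zero, smul_zero]
        · rw [if_neg (by intro h; exact h1 (by have := h.2; omega)), if_neg h1, map_zero,
            smul_zero]
      have hC : (n:ℂ) • (if a = j ∧ m + -n = 0 then (xop α x0 b n) v else 0)
          = (if n = m then (if a = j then ((n:ℂ) • (xop α x0 b n) v) else 0) else 0) := by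
        by_cases h1 : n = m
        · subst h1
          by_cases ha : a = j
          · rw [if_pos ⟨ha, by omega⟩, if_pos rfl, if_pos ha]
          · rw [if_neg (fun h => ha h.1), if_pos rfl, if_neg ha, smul_zero]
        · rw [if_neg (by intro h; exact h1 (by have := h.2; omega)), if_neg h1, smul_zero]
      rw [smul_add, smul_add, hB, hC, add_assoc]
    rw [Finset.sum_congr rfl hterm, Finset.sum_add_distrib, Finset.sum_add_distrib,
        Finset.sum_ite_eq' (Finset.Icc (-M) M) (-m)
          (fun n => (if b = j then ((n:ℂ) • (xop α x0 a (-n)) v) else 0)),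
        Finset.sum_ite_eq' (Finset.Icc (-M) M) m
          (fun n => (if a = j then ((n:ℂ) • (xop α x0 b n) v) else 0)),
        if_pos hmM', if_pos hmM]
    simp only [neg_neg, Int.cast_neg]
  have hsum2 : (β j m) (∑ a : Fin 3, ∑ b : Fin 3, eps i a b • (x0 a) ((α b 0) v))
      = (∑ a : Fin 3, ∑ b : Fin 3, eps i a b • (x0 a) ((α b 0) ((β j m) v)))
        + ∑ a : Fin 3, ∑ b : Fin 3, eps i a b • (if a = j ∧ m = 0 then (α b 0) v else 0) := by
    rw [map_sum, ← Finset.sum_add_distrib]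
    refine Finset.sum_congr rfl fun a _ => ?_
    rw [map_sum, ← Finset.sum_add_distrib]
    refine Finset.sum_congr rfl fun b _ => ?_
    rw [map_zsmul, h2 a b, smul_add]
  have hsum3 : (β j m) (∑ a : Fin 3, ∑ b : Fin 3, eps i a b •
        ∑ n ∈ Finset.Icc (-M) M, (n:ℂ) • (xop α x0 a (-n)) ((xop α x0 b n) v))
      = (∑ a : Fin 3, ∑ b : Fin 3, eps i a b •
          ∑ n ∈ Finset.Icc (-M) M, (n:ℂ) • (xop α x0 a (-n)) ((xop α x0 b n) ((β j m) v)))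
        + ∑ a : Fin 3, ∑ b : Fin 3, eps i a b •
            ((if b = j then (-(m:ℂ)) • (xop α x0 a m) v else 0)
              + (if a = j then (m:ℂ) • (xop α x0 b m) v else 0)) := by
    rw [map_sum, ← Finset.sum_add_distrib]
    refine Finset.sum_congr rfl fun a _ => ?_
    rw [map_sum, ← Finset.sum_add_distrib]
    refine Finset.sum_congr rfl fun b _ => ?_
    rw [map_zsmul, h3 a b, smul_add]
  have trans : (β j m) (Pop α β x0 i v) - Pop α β x0 i ((β j m) v)
      = (∑ k : Fin 3, eps j i k • (α k m) v)
        + (∑ a : Fin 3, ∑ b : Fin 3, eps i a b • (if a = j ∧ m = 0 then (α b 0) v else 0))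
        - (2:ℂ)⁻¹ • (∑ a : Fin 3, ∑ b : Fin 3, eps i a b •
            ((if b = j then (-(m:ℂ)) • (xop α x0 a m) v else 0)
              + (if a = j then (m:ℂ) • (xop α x0 b m) v else 0))) := by
    rw [expandv, expandw, map_sub, map_add, map_smul, h1, hsum2, hsum3, smul_add]
    abel
  rw [trans]
  by_cases hm : m = 0
  · subst hm
    simp only [Int.cast_zero, neg_zero, zero_smul, ite_self, add_zero, smul_zero,
      Finset.sum_const_zero, sub_zero, and_true]
    have e2 : (∑ a : Fin 3, ∑ b : Fin 3, eps i a b • (if a = j then (α b 0) v else 0))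
        = ∑ b : Fin 3, eps i j b • (α b 0) v := by
      rw [Finset.sum_eq_single_of_mem j (Finset.mem_univ j)]
      · simp
      · intro a _ ha
        simp [ha]
    rw [e2, ← Finset.sum_add_distrib]
    apply Finset.sum_eq_zero
    intro k _
    rw [eps_swap12 j i k, neg_smul, neg_add_cancel]
  · have hmc : (m:ℂ) ≠ 0 := Int.cast_ne_zero.mpr hm
    have hY1 : ∀ a : Fin 3, (-(m:ℂ)) • (xop α x0 a m) v = (α a m) v := by
      intro a
      simp only [xop, if_neg hm, LinearMap.smul_apply, smul_smul]
      rw [show (-(m:ℂ)) * (-(m:ℂ)⁻¹) = 1 by field_simp, one_smul]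
    have hY2 : ∀ a : Fin 3, (m:ℂ) • (xop α x0 a m) v = -((α a m) v) := by
      intro a
      simp only [xop, if_neg hm, LinearMap.smul_apply, smul_smul]
      rw [show (m:ℂ) * (-(m:ℂ)⁻¹) = -1 by field_simp, neg_one_smul]
    simp only [hY1, hY2, hm, and_false, if_false, smul_zero, Finset.sum_const_zero, add_zero]
    simp only [smul_add, Finset.sum_add_distrib]
    have e3a : (∑ a : Fin 3, ∑ b : Fin 3, eps i a b • (if b = j then (α a m) v else 0))
        = ∑ a : Fin 3, eps i a j • (α a m) v := by
      refine Finset.sum_congr rfl fun a _ => ?_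
      rw [Finset.sum_eq_single_of_mem j (Finset.mem_univ j)]
      · simp
      · intro b _ hb
        simp [hb]
    have e3b : (∑ a : Fin 3, ∑ b : Fin 3, eps i a b • (if a = j then -((α b m) v) else 0))
        = ∑ b : Fin 3, eps i j b • -((α b m) v) := by
      rw [Finset.sum_eq_single_of_mem j (Finset.mem_univ j)]
      · simp
      · intro a _ ha
        simp [ha]
    rw [e3a, e3b]
    have g1 : (∑ k : Fin 3, eps j i k • (α k m) v)
        = -(∑ k : Fin 3, eps i j k • (α k m) v) := by
      rw [← Finset.sum_neg_distrib]
      refine Finset.sum_congr rfl fun k _ => ?_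
      rw [eps_swap12 j i k, neg_smul]
    have g2 : (∑ a : Fin 3, eps i a j • (α a m) v)
        = -(∑ k : Fin 3, eps i j k • (α k m) v) := by
      rw [← Finset.sum_neg_distrib]
      refine Finset.sum_congr rfl fun a _ => ?_
      rw [eps_swap23 i a j, neg_smul]
    have g3 : (∑ b : Fin 3, eps i j b • -((α b m) v))
        = -(∑ k : Fin 3, eps i j k • (α k m) v) := by
      rw [← Finset.sum_neg_distrib]
      refine Finset.sum_congr rfl fun b _ => ?_
      rw [smul_neg]
    rw [g1, g2, g3]
    set S := ∑ k : Fin 3, eps i j k • (α k m) v with hS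
    rw [← add_smul]
    norm_num
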